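/- Let X and Y be Banach spaces and let G ∈ L(X,Y) with ‖G‖ = 1. Then for T ∈ L(X,Y) the following are equivalent: (i) max_{ω ∈ S¹} ‖G + ωT‖_G = 1 + ‖T‖_G, i.e., there exists ω ∈ 𝕂 with |ω| = 1 such that ‖G + ωT‖_G = 1 + ‖T‖_G; (ii) ν_G(T) = ‖T‖_G. -/

import Mathlib

open Filter Topology

variable {𝕜 : Type*} [RCLike 𝕜]

/-- The `G`-norm of an operator `T`:
`‖T‖_G := inf_{δ>0} sup {‖Tx‖ : x ∈ S_X, ‖Gx‖ > 1 - δ}`. -/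
noncomputable def Gnorm {X Y : Type*} [NormedAddCommGroup X] [NormedSpace 𝕜 X]
    [NormedAddCommGroup Y] [NormedSpace 𝕜 Y] (G T : X →L[𝕜] Y) : ℝ :=
  ⨅ δ : {δ : ℝ // 0 < δ},
    sSup {r : ℝ | ∃ x : X, ‖x‖ = 1 ∧ 1 - (δ : ℝ) < ‖G x‖ ∧ r = ‖T x‖}

/-- The numerical range of `T` with respect to `G`:
`V_G(T) := ⋂_{δ>0} closure {y*(Tx) : x ∈ S_X, y* ∈ S_{Y*}, Re y*(Gx) > 1 - δ}`. -/
def VG {X Y : Type*} [NormedAddCommGroup X] [NormedSpace 𝕜 X]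
    [NormedAddCommGroup Y] [NormedSpace 𝕜 Y] (G T : X →L[𝕜] Y) : Set 𝕜 :=
  ⋂ δ ∈ Set.Ioi (0 : ℝ),
    closure {z : 𝕜 | ∃ (x : X) (f : Y →L[𝕜] 𝕜),
      ‖x‖ = 1 ∧ ‖f‖ = 1 ∧ 1 - δ < RCLike.re (f (G x)) ∧ z = f (T x)}

/-- The numerical radius of `T` with respect to `G`: `ν_G(T) := max {|λ| : λ ∈ V_G(T)}`. -/
noncomputable def nuG {X Y : Type*} [NormedAddCommGroup X] [NormedSpace 𝕜 X]
    [NormedAddCommGroup Y] [NormedSpace 𝕜 Y] (G T : X →L[𝕜] Y) : ℝ :=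
  sSup {r : ℝ | ∃ z ∈ VG G T, r = ‖z‖}

namespace StmtAux

variable {X Y : Type*} [NormedAddCommGroup X] [NormedSpace 𝕜 X]
    [NormedAddCommGroup Y] [NormedSpace 𝕜 Y]

def sset (G T : X →L[𝕜] Y) (δ : ℝ) : Set ℝ :=
  {r : ℝ | ∃ x : X, ‖x‖ = 1 ∧ 1 - δ < ‖G x‖ ∧ r = ‖T x‖}

noncomputable def sfun (G T : X →L[𝕜] Y) (δ : ℝ) : ℝ := sSup (sset G T δ)

lemma Gnorm_def (G T : X →L[𝕜] Y) :
    Gnorm G T = ⨅ δ : {δ : ℝ // 0 < δ}, sfun G T (δ : ℝ) := rfl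

def zset (G T : X →L[𝕜] Y) (δ : ℝ) : Set 𝕜 :=
  {z : 𝕜 | ∃ (x : X) (f : Y →L[𝕜] 𝕜),
    ‖x‖ = 1 ∧ ‖f‖ = 1 ∧ 1 - δ < RCLike.re (f (G x)) ∧ z = f (T x)}

lemma mem_VG_iff {G T : X →L[𝕜] Y} {z : 𝕜} :
    z ∈ VG G T ↔ ∀ δ > (0:ℝ), z ∈ closure (zset G T δ) := by
  simp only [VG, Set.mem_iInter, Set.mem_Ioi, zset]

lemma exists_unit {G : X →L[𝕜] Y} (hG : ‖G‖ = 1) {δ : ℝ} (hδ : 0 < δ) :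
    ∃ x : X, ‖x‖ = 1 ∧ 1 - δ < ‖G x‖ := by
  by_contra h
  push_neg at h
  have hGne : G ≠ 0 := by intro h0; rw [h0, norm_zero] at hG; norm_num at hG
  obtain ⟨v, hv⟩ : ∃ v : X, G v ≠ 0 := by
    by_contra hv; push_neg at hv
    exact hGne (ContinuousLinearMap.ext fun x => by simp [hv x])
  have hv0 : v ≠ 0 := fun h0 => hv (by simp [h0])
  have hnv : ‖v‖ ≠ 0 := norm_ne_zero_iff.mpr hv0
  have hu1 : ‖((‖v‖ : 𝕜)⁻¹ • v : X)‖ = 1 := by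
    rw [norm_smul, norm_inv, RCLike.norm_ofReal, abs_of_nonneg (norm_nonneg v),
      inv_mul_cancel₀ hnv]
  have h1 : (0:ℝ) ≤ 1 - δ := le_trans (norm_nonneg _) (h _ hu1)
  have hb : ‖G‖ ≤ 1 - δ := by
    apply ContinuousLinearMap.opNorm_le_bound _ h1
    intro x
    rcases eq_or_ne x 0 with rfl | hx
    · simp
    · have hnx : ‖x‖ ≠ 0 := norm_ne_zero_iff.mpr hx
      have h2 := h ((‖x‖ : 𝕜)⁻¹ • x) (by
        rw [norm_smul, norm_inv, RCLike.norm_ofReal, abs_of_nonneg (norm_nonneg x),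
          inv_mul_cancel₀ hnx])
      rw [map_smul, norm_smul, norm_inv, RCLike.norm_ofReal,
        abs_of_nonneg (norm_nonneg x)] at h2
      have h3 : ‖x‖ * (‖x‖⁻¹ * ‖G x‖) ≤ ‖x‖ * (1 - δ) :=
        mul_le_mul_of_nonneg_left h2 (norm_nonneg x)
      calc ‖G x‖ = ‖x‖ * (‖x‖⁻¹ * ‖G x‖) := by field_simp
        _ ≤ ‖x‖ * (1 - δ) := h3
        _ = (1 - δ) * ‖x‖ := by ring
  rw [hG] at hb; linarith

lemma sset_nonempty {G : X →L[𝕜] Y} (hG : ‖G‖ = 1) (T : X →L[𝕜] Y) {δ : ℝ} (hδ : 0 < δ) :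
    (sset G T δ).Nonempty := by
  obtain ⟨x, hx, hGx⟩ := exists_unit hG hδ
  exact ⟨‖T x‖, ⟨x, hx, hGx, rfl⟩⟩

lemma sset_bddAbove {G T : X →L[𝕜] Y} {δ : ℝ} : BddAbove (sset G T δ) := by
  refine ⟨‖T‖, ?_⟩
  rintro r ⟨x, hx, -, rfl⟩
  simpa [hx] using T.le_opNorm x

lemma sfun_nonneg {G : X →L[𝕜] Y} (hG : ‖G‖ = 1) (T : X →L[𝕜] Y) {δ : ℝ} (hδ : 0 < δ) :
    0 ≤ sfun G T δ := by
  obtain ⟨x, hx, hGx⟩ := exists_unit hG hδ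
  exact le_trans (norm_nonneg (T x)) (le_csSup sset_bddAbove ⟨x, hx, hGx, rfl⟩)

lemma Gnorm_le_sfun {G : X →L[𝕜] Y} (hG : ‖G‖ = 1) (T : X →L[𝕜] Y) {δ : ℝ} (hδ : 0 < δ) :
    Gnorm G T ≤ sfun G T δ := by
  rw [Gnorm_def]
  have hbdd : BddBelow (Set.range fun δ : {δ : ℝ // 0 < δ} => sfun G T (δ : ℝ)) := by
    refine ⟨0, ?_⟩
    rintro r ⟨⟨δ', hδ'⟩, rfl⟩
    exact sfun_nonneg hG T hδ'
  exact ciInf_le hbdd ⟨δ, hδ⟩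

lemma le_Gnorm {G T : X →L[𝕜] Y} {c : ℝ} (h : ∀ δ, 0 < δ → c ≤ sfun G T δ) :
    c ≤ Gnorm G T := by
  rw [Gnorm_def]
  exact le_ciInf fun δ => h δ δ.2

lemma Gnorm_nonneg {G : X →L[𝕜] Y} (hG : ‖G‖ = 1) (T : X →L[𝕜] Y) : 0 ≤ Gnorm G T :=
  le_Gnorm fun δ hδ => sfun_nonneg hG T hδ

lemma exists_sfun_lt {G T : X →L[𝕜] Y} {c : ℝ} (h : Gnorm G T < c) :
    ∃ δ, 0 < δ ∧ sfun G T δ < c := by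
  rw [Gnorm_def] at h
  obtain ⟨⟨δ, hδ⟩, h⟩ := exists_lt_of_ciInf_lt h
  exact ⟨δ, hδ, h⟩

lemma norm_le_sfun_of_mem_zset {G T : X →L[𝕜] Y} {δ : ℝ} {z : 𝕜} (hz : z ∈ zset G T δ) :
    ‖z‖ ≤ sfun G T δ := by
  obtain ⟨x, f, hx, hf, hre, rfl⟩ := hz
  have hfG : RCLike.re (f (G x)) ≤ ‖G x‖ :=
    le_trans (RCLike.re_le_norm _) (by simpa [hf] using f.le_opNorm (G x))
  have h1 : 1 - δ < ‖G x‖ := lt_of_lt_of_le hre hfG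
  calc ‖f (T x)‖ ≤ ‖T x‖ := by simpa [hf] using f.le_opNorm (T x)
    _ ≤ sfun G T δ := le_csSup sset_bddAbove ⟨x, hx, h1, rfl⟩

lemma zset_subset_ball {G T : X →L[𝕜] Y} {δ : ℝ} :
    zset G T δ ⊆ Metric.closedBall (0 : 𝕜) ‖T‖ := by
  rintro z ⟨x, f, hx, hf, -, rfl⟩
  rw [Metric.mem_closedBall, dist_zero_right]
  calc ‖f (T x)‖ ≤ ‖T x‖ := by simpa [hf] using f.le_opNorm (T x)
    _ ≤ ‖T‖ := by simpa [hx] using T.le_opNorm x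

lemma zset_mono {G T : X →L[𝕜] Y} {δ δ' : ℝ} (h : δ ≤ δ') :
    zset G T δ ⊆ zset G T δ' := by
  rintro z ⟨x, f, hx, hf, hre, rfl⟩
  exact ⟨x, f, hx, hf, lt_of_le_of_lt (by linarith) hre, rfl⟩

lemma zset_nonempty {G : X →L[𝕜] Y} (hG : ‖G‖ = 1) (T : X →L[𝕜] Y) {δ : ℝ} (hδ : 0 < δ) :
    (zset G T δ).Nonempty := by
  obtain ⟨x, hx, hGx⟩ := exists_unit hG (δ := min δ 2⁻¹) (lt_min hδ (by norm_num))
  have h1 : min δ 2⁻¹ ≤ 2⁻¹ := min_le_right _ _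
  have h2 : min δ 2⁻¹ ≤ δ := min_le_left _ _
  have hGx0 : G x ≠ 0 := by
    intro h0; rw [h0, norm_zero] at hGx; linarith
  obtain ⟨f, hf, hfx⟩ := exists_dual_vector 𝕜 (G x) (norm_ne_zero_iff.mpr hGx0)
  refine ⟨f (T x), x, f, hx, hf, ?_, rfl⟩
  rw [hfx, RCLike.ofReal_re]
  linarith
lemma norm_le_Gnorm_of_mem_VG {G T : X →L[𝕜] Y} (hG : ‖G‖ = 1) {z : 𝕜} (hz : z ∈ VG G T) :
    ‖z‖ ≤ Gnorm G T := by
  apply le_Gnorm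
  intro δ hδ
  have hzc : z ∈ closure (zset G T δ) := mem_VG_iff.mp hz δ hδ
  have hsub : closure (zset G T δ) ⊆ {w : 𝕜 | ‖w‖ ≤ sfun G T δ} :=
    closure_minimal (fun w hw => norm_le_sfun_of_mem_zset hw)
      (isClosed_le continuous_norm continuous_const)
  exact hsub hzc

lemma nuG_le_Gnorm {G T : X →L[𝕜] Y} (hG : ‖G‖ = 1) : nuG G T ≤ Gnorm G T := by
  apply Real.sSup_le ?_ (Gnorm_nonneg hG T)
  rintro r ⟨z, hz, rfl⟩
  exact norm_le_Gnorm_of_mem_VG hG hz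

lemma le_nuG {G T : X →L[𝕜] Y} (hG : ‖G‖ = 1) {z : 𝕜} (hz : z ∈ VG G T) :
    ‖z‖ ≤ nuG G T := by
  have hmem : ‖z‖ ∈ {r : ℝ | ∃ w ∈ VG G T, r = ‖w‖} := ⟨z, hz, rfl⟩
  refine le_csSup ⟨Gnorm G T, ?_⟩ hmem
  rintro r ⟨w, hw, rfl⟩
  exact norm_le_Gnorm_of_mem_VG hG hw

lemma exists_mem_VG {G T : X →L[𝕜] Y} (hG : ‖G‖ = 1) {c : ℝ}
    (h : ∀ δ > (0:ℝ), ∀ ε > (0:ℝ), ∃ z ∈ zset G T δ, c - ε ≤ ‖z‖) :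
    ∃ z ∈ VG G T, c ≤ ‖z‖ := by
  set K : {δ : ℝ // 0 < δ} → Set 𝕜 :=
    fun δ => closure (zset G T (δ : ℝ)) ∩ {z : 𝕜 | c ≤ ‖z‖} with hK
  have hclosed : ∀ δ, IsClosed (K δ) := fun δ =>
    isClosed_closure.inter (isClosed_le continuous_const continuous_norm)
  have hcompact : ∀ δ, IsCompact (K δ) := by
    intro δ
    apply Metric.isCompact_of_isClosed_isBounded (hclosed δ)
    have hsub : K δ ⊆ Metric.closedBall (0:𝕜) ‖T‖ :=
      Set.inter_subset_left.trans (closure_minimal zset_subset_ball Metric.isClosed_closedBall)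
    exact Metric.isBounded_closedBall.subset hsub
  have hne : ∀ δ, (K δ).Nonempty := by
    rintro ⟨δ, hδ⟩
    have hcc : IsCompact (closure (zset G T δ)) := by
      apply Metric.isCompact_of_isClosed_isBounded isClosed_closure
      exact Metric.isBounded_closedBall.subset
        (closure_minimal zset_subset_ball Metric.isClosed_closedBall)
    obtain ⟨z, hzc, hmax⟩ := hcc.exists_isMaxOn
      ((zset_nonempty hG T hδ).mono subset_closure) continuous_norm.continuousOn
    refine ⟨z, hzc, ?_⟩
    show c ≤ ‖z‖
    refine le_of_forall_pos_le_add fun ε hε => ?_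
    obtain ⟨w, hw, hcw⟩ := h δ hδ ε hε
    have hwz : ‖w‖ ≤ ‖z‖ := hmax (subset_closure hw)
    linarith
  have hdir : Directed (· ⊇ ·) K := by
    rintro ⟨δ₁, h₁⟩ ⟨δ₂, h₂⟩
    refine ⟨⟨min δ₁ δ₂, lt_min h₁ h₂⟩, ?_, ?_⟩
    · exact Set.inter_subset_inter (closure_mono (zset_mono (min_le_left _ _))) subset_rfl
    · exact Set.inter_subset_inter (closure_mono (zset_mono (min_le_right _ _))) subset_rfl
  obtain ⟨z, hz⟩ :=
    IsCompact.nonempty_iInter_of_directed_nonempty_isCompact_isClosed K hdir hne hcompact hclosed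
  simp only [Set.mem_iInter] at hz
  refine ⟨z, mem_VG_iff.mpr fun δ hδ => (hz ⟨δ, hδ⟩).1, (hz ⟨1, one_pos⟩).2⟩

lemma VG_isCompact (G T : X →L[𝕜] Y) : IsCompact (VG G T) := by
  apply Metric.isCompact_of_isClosed_isBounded
  · exact isClosed_biInter fun δ _ => isClosed_closure
  · have hsub : VG G T ⊆ Metric.closedBall (0:𝕜) ‖T‖ := fun z hz =>
      closure_minimal zset_subset_ball Metric.isClosed_closedBall (mem_VG_iff.mp hz 1 one_pos)
    exact Metric.isBounded_closedBall.subset hsub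

lemma gnorm_add_le {G T : X →L[𝕜] Y} {ω : 𝕜} (hG : ‖G‖ = 1) (hω : ‖ω‖ = 1) :
    Gnorm G (G + ω • T) ≤ 1 + Gnorm G T := by
  refine le_of_forall_pos_le_add fun ε hε => ?_
  obtain ⟨δ, hδ, hs⟩ := exists_sfun_lt (G := G) (T := T) (lt_add_of_pos_right _ hε)
  have h1 : Gnorm G (G + ω • T) ≤ sfun G (G + ω • T) δ := Gnorm_le_sfun hG _ hδ
  have h2 : sfun G (G + ω • T) δ ≤ 1 + sfun G T δ := by
    apply Real.sSup_le ?_ (by linarith [sfun_nonneg hG T hδ])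
    rintro r ⟨x, hx, hGx, rfl⟩
    have ha : ‖(G + ω • T) x‖ ≤ ‖G x‖ + ‖T x‖ := by
      simp only [ContinuousLinearMap.add_apply, ContinuousLinearMap.smul_apply]
      refine (norm_add_le _ _).trans ?_
      simp [norm_smul, hω]
    have hb : ‖G x‖ ≤ 1 := by simpa [hx, hG] using G.le_opNorm x
    have hc : ‖T x‖ ≤ sfun G T δ := le_csSup sset_bddAbove ⟨x, hx, hGx, rfl⟩
    linarith
  linarith
lemma ge_of_mem_VG {G T : X →L[𝕜] Y} (hG : ‖G‖ = 1) {z ω : 𝕜}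
    (hz : z ∈ VG G T) (hω : ‖ω‖ = 1) (hωz : ω * z = ((‖z‖ : ℝ) : 𝕜)) :
    1 + ‖z‖ ≤ Gnorm G (G + ω • T) := by
  apply le_Gnorm
  intro δ hδ
  refine le_of_forall_pos_le_add fun ε hε => ?_
  set δ' := min δ (ε / 2) with hδ'def
  have hδ'pos : 0 < δ' := lt_min hδ (by linarith)
  have hδ'δ : δ' ≤ δ := min_le_left _ _
  have hδ'ε : δ' ≤ ε / 2 := min_le_right _ _
  have hzc := mem_VG_iff.mp hz δ' hδ'pos
  rw [Metric.mem_closure_iff] at hzc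
  obtain ⟨z', hz', hdist⟩ := hzc (ε / 2) (by linarith)
  obtain ⟨x, f, hx, hf, hre, rfl⟩ := hz'
  have hfG : RCLike.re (f (G x)) ≤ ‖G x‖ :=
    le_trans (RCLike.re_le_norm _) (by simpa [hf] using f.le_opNorm (G x))
  have hGx : 1 - δ < ‖G x‖ := lt_of_lt_of_le (lt_of_le_of_lt (by linarith) hre) hfG
  have hmem : ‖(G + ω • T) x‖ ∈ sset G (G + ω • T) δ := ⟨x, hx, hGx, rfl⟩
  have e1 : f ((G + ω • T) x) = f (G x) + ω * f (T x) := by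
    simp [map_smul, smul_eq_mul]
  have e2 : RCLike.re (f ((G + ω • T) x)) ≤ ‖(G + ω • T) x‖ := by
    refine le_trans (RCLike.re_le_norm _) ?_
    have h := f.le_opNorm ((G + ω • T) x)
    rwa [hf, one_mul] at h
  have e3 : ‖z‖ - ε / 2 ≤ RCLike.re (ω * f (T x)) := by
    have hsplit : ω * f (T x) = ((‖z‖ : ℝ) : 𝕜) + ω * (f (T x) - z) := by
      rw [mul_sub, ← hωz]; ring
    rw [hsplit, map_add, RCLike.ofReal_re]
    have h4 : |RCLike.re (ω * (f (T x) - z))| ≤ ‖ω * (f (T x) - z)‖ :=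
      RCLike.abs_re_le_norm _
    have h5 : ‖ω * (f (T x) - z)‖ = ‖f (T x) - z‖ := by rw [norm_mul, hω, one_mul]
    have h6 : ‖f (T x) - z‖ < ε / 2 := by
      rw [← dist_eq_norm, dist_comm]
      exact hdist
    have h7 := abs_le.mp h4
    linarith
  have e4 : 1 - ε / 2 ≤ RCLike.re (f (G x)) := le_trans (by linarith) hre.le
  have key : 1 + ‖z‖ - ε ≤ ‖(G + ω • T) x‖ := by
    have := e2
    rw [e1, map_add] at this
    linarith
  have hfin : 1 + ‖z‖ - ε ≤ sfun G (G + ω • T) δ :=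
    key.trans (le_csSup sset_bddAbove hmem)
  linarith

lemma substep {G T : X →L[𝕜] Y} {ω : 𝕜} (hG : ‖G‖ = 1) (hω : ‖ω‖ = 1)
    (heq : Gnorm G (G + ω • T) = 1 + Gnorm G T) :
    ∀ δ > (0:ℝ), ∀ ε > (0:ℝ), ∃ z ∈ zset G T δ, Gnorm G T - ε ≤ ‖z‖ := by
  intro δ hδ ε hε
  set c := Gnorm G T with hcdef
  have hc : 0 ≤ c := Gnorm_nonneg hG T
  set ε₀ := min (min ε (δ / 3)) 2⁻¹ with hε₀def
  have hε₀ : 0 < ε₀ := lt_min (lt_min hε (by linarith)) (by norm_num)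
  have hε₀ε : ε₀ ≤ ε := le_trans (min_le_left _ _) (min_le_left _ _)
  have hε₀δ : ε₀ ≤ δ / 3 := le_trans (min_le_left _ _) (min_le_right _ _)
  have hε₀h : ε₀ ≤ 2⁻¹ := min_le_right _ _
  obtain ⟨δ₂, hδ₂, hs₂⟩ := exists_sfun_lt (G := G) (T := T)
    (show Gnorm G T < c + ε₀ by rw [← hcdef]; linarith)
  have hbig : 1 + c ≤ sfun G (G + ω • T) δ₂ := by
    rw [← heq]; exact Gnorm_le_sfun hG _ hδ₂
  obtain ⟨r, hr, hrgt⟩ := exists_lt_of_lt_csSup (sset_nonempty hG (G + ω • T) hδ₂)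
    (show 1 + c - ε₀ < sfun G (G + ω • T) δ₂ by linarith)
  obtain ⟨x, hx, hGx2, rfl⟩ := hr
  have hvpos : (0:ℝ) < ‖(G + ω • T) x‖ := by
    have : (2:ℝ)⁻¹ ≤ 1 + c - ε₀ := by linarith
    linarith [this.trans_lt hrgt]
  obtain ⟨f, hf, hfv⟩ := exists_dual_vector 𝕜 ((G + ω • T) x) hvpos.ne'
  have hTx : ‖T x‖ ≤ c + ε₀ :=
    le_trans (le_csSup sset_bddAbove ⟨x, hx, hGx2, rfl⟩) hs₂.le
  have hsplit : f ((G + ω • T) x) = f (G x) + ω * f (T x) := by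
    simp [map_smul, smul_eq_mul]
  have hrei : RCLike.re (f (G x)) + RCLike.re (ω * f (T x)) = ‖(G + ω • T) x‖ := by
    have h := congrArg RCLike.re hsplit
    rw [map_add] at h
    rw [← h, hfv, RCLike.ofReal_re]
  have hb1 : |RCLike.re (ω * f (T x))| ≤ ‖T x‖ := by
    refine le_trans (RCLike.abs_re_le_norm _) ?_
    rw [norm_mul, hω, one_mul]
    simpa [hf] using f.le_opNorm (T x)
  have hGx1 : ‖G x‖ ≤ 1 := by simpa [hx, hG] using G.le_opNorm x
  have hfG_le : RCLike.re (f (G x)) ≤ 1 :=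
    le_trans (le_trans (RCLike.re_le_norm _) (by simpa [hf] using f.le_opNorm (G x))) hGx1
  have h2 := abs_le.mp hb1
  have hreG : 1 - δ < RCLike.re (f (G x)) := by
    -- re f(Gx) = ‖v‖ - re(ω f Tx) ≥ (1+c-ε₀) - (c+ε₀) = 1 - 2ε₀ > 1-δ
    nlinarith [hrgt, hTx, hε₀δ, hδ, hrei, h2.2]
  have hreT : c - ε₀ ≤ RCLike.re (ω * f (T x)) := by linarith
  have hnz : c - ε ≤ ‖f (T x)‖ := by
    have h3 : RCLike.re (ω * f (T x)) ≤ ‖ω * f (T x)‖ := RCLike.re_le_norm _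
    rw [norm_mul, hω, one_mul] at h3
    linarith
  exact ⟨f (T x), ⟨x, f, hx, hf, hreG, rfl⟩, hnz⟩

end StmtAux

open StmtAux

/-- For Banach spaces `X, Y`, a norm-one operator `G ∈ L(X,Y)` and `T ∈ L(X,Y)`, the
following are equivalent: (i) `max_{ω ∈ S¹} ‖G + ωT‖_G = 1 + ‖T‖_G`, i.e., there is
`ω` with `|ω| = 1` and `‖G + ωT‖_G = 1 + ‖T‖_G`; (ii) `ν_G(T) = ‖T‖_G`. -/
theorem stmt_7 {X Y : Type*} [NormedAddCommGroup X] [NormedSpace 𝕜 X] [CompleteSpace X]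
    [NormedAddCommGroup Y] [NormedSpace 𝕜 Y] [CompleteSpace Y]
    (G : X →L[𝕜] Y) (hG : ‖G‖ = 1) (T : X →L[𝕜] Y) :
    (∃ ω : 𝕜, ‖ω‖ = 1 ∧ Gnorm G (G + ω • T) = 1 + Gnorm G T) ↔ nuG G T = Gnorm G T := by
  constructor
  · rintro ⟨ω, hω, heq⟩
    refine le_antisymm (nuG_le_Gnorm hG) ?_
    obtain ⟨z, hz, hc⟩ := exists_mem_VG hG (substep hG hω heq)
    exact le_trans hc (le_nuG hG hz)
  · intro hnu
    have hVGne : (VG G T).Nonempty := by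
      obtain ⟨z, hz, -⟩ := exists_mem_VG (c := 0) hG (fun δ hδ ε hε => by
        obtain ⟨z, hz⟩ := zset_nonempty hG T hδ
        exact ⟨z, hz, by linarith [norm_nonneg z]⟩)
      exact ⟨z, hz⟩
    obtain ⟨z, hz, hmax⟩ := (VG_isCompact G T).exists_isMaxOn hVGne continuous_norm.continuousOn
    have hzG : ‖z‖ = Gnorm G T := by
      refine le_antisymm (norm_le_Gnorm_of_mem_VG hG hz) ?_
      rw [← hnu]
      apply Real.sSup_le ?_ (norm_nonneg z)
      rintro r ⟨w, hw, rfl⟩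
      exact hmax hw
    rcases eq_or_ne z 0 with rfl | hzne
    · refine ⟨1, norm_one, ?_⟩
      have hge := ge_of_mem_VG hG hz (norm_one) (by simp)
      have hle := gnorm_add_le (T := T) hG (norm_one (α := 𝕜))
      have h0 : Gnorm G T = 0 := by rw [← hzG, norm_zero]
      rw [norm_zero] at hge
      linarith
    · have hz0 : ‖z‖ ≠ 0 := norm_ne_zero_iff.mpr hzne
      have hz0' : ((‖z‖ : ℝ) : 𝕜) ≠ 0 := RCLike.ofReal_ne_zero.mpr hz0
      set ω := (starRingEnd 𝕜) z / ((‖z‖ : ℝ) : 𝕜) with hωdef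
      have hω : ‖ω‖ = 1 := by
        rw [hωdef, norm_div, RCLike.norm_conj, RCLike.norm_ofReal,
          abs_of_nonneg (norm_nonneg z), div_self hz0]
      have hωz : ω * z = ((‖z‖ : ℝ) : 𝕜) := by
        have h1 : (starRingEnd 𝕜) z * z = ((‖z‖ : ℝ) : 𝕜) ^ 2 := by
          exact_mod_cast RCLike.conj_mul z
        rw [hωdef, div_mul_eq_mul_div, h1, sq, mul_div_assoc, div_self hz0', mul_one]
      refine ⟨ω, hω, le_antisymm (gnorm_add_le hG hω) ?_⟩
      have hge := ge_of_mem_VG hG hz hω hωz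
      rw [hzG] at hge
      exact hge
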